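/- Let p = (i, ℓ) be a path with 0 < ℓ < a_i + b_i, and let pD denote the path (i − ℓ, a_i + b_i − ℓ) (the descent of p). Then grade(pD) = 2 − grade(p); equivalently, grade(i, ℓ) + grade(i − ℓ, a_i + b_i − ℓ) = 2. -/
import Mathlib


/-- Paths of the quiver `ℤ` (arrows `i → i - 1`) are pairs `(source, length)`;
`p` is a subpath of `q` iff the source of `p` is at most that of `q` and the
target of `q` is at most that of `p`. -/
def ZIsSubpath (p q : ℤ × ℕ) : Prop :=
  p.1 ≤ q.1 ∧ q.1 - (q.2 : ℤ) ≤ p.1 - (p.2 : ℤ)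

/-- Proper subpath: a subpath that is not the whole path. -/
def ZIsProperSubpath (p q : ℤ × ℕ) : Prop :=
  ZIsSubpath p q ∧ p ≠ q

/-- A path is factorisable (w.r.t. the factorisable vertices, i.e. the values
of `x`) if both its source and its target are factorisable vertices. -/
def IsFactorisable (x : ℤ → ℤ) (p : ℤ × ℕ) : Prop :=
  (∃ s : ℤ, x s = p.1) ∧ ∃ s : ℤ, x s = p.1 - (p.2 : ℤ)

/-- The grade of the path `(i, ℓ)` is `m i - m (i - ℓ)`, where
`m t = max {s : x s ≤ t}`. -/
def pathGrade (m : ℤ → ℤ) (p : ℤ × ℕ) : ℤ :=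
  m p.1 - m (p.1 - (p.2 : ℤ))

/-- **Descent and grade.** If `0 < ℓ < a i + b i`, then the descent
`(i - ℓ, a i + b i - ℓ)` of the path `(i, ℓ)` satisfies
`grade (descent) = 2 - grade (i, ℓ)`. -/
theorem descent_grade (x m : ℤ → ℤ) (hx : StrictMono x)
    (hm : ∀ t : ℤ, x (m t) ≤ t ∧ ∀ s : ℤ, x s ≤ t → s ≤ m t)
    (N : Set (ℤ × ℕ))
    (hN0 : ∀ i : ℤ, (i, 0) ∈ N)
    (hNdown : ∀ p q : ℤ × ℕ, ZIsSubpath p q → q ∈ N → p ∈ N)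
    (hNbdd : ∃ B : ℕ, ∀ p ∈ N, p.2 ≤ B)
    (C : Set (ℤ × ℕ)) (hCN : C ⊆ N)
    (hCanti : ∀ p ∈ C, ∀ q ∈ C, ZIsSubpath p q → p = q)
    (hCmax : ∀ p ∈ C, ∀ q ∈ N, ZIsSubpath p q → p = q)
    (hC2 : ∀ p : ℤ × ℕ, IsFactorisable x p → pathGrade m p = 2 → p ∈ C)
    (a b : ℤ → ℕ)
    (ha : ∀ i : ℤ, (i, a i) ∈ N ∧ ∀ ℓ : ℕ, (i, ℓ) ∈ N → ℓ ≤ a i)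
    (hb : ∀ i : ℤ, (b i = 0 ∧ ∃ ℓ : ℕ, (i, ℓ) ∈ C) ∨ (b i = 1 ∧ ¬ ∃ ℓ : ℕ, (i, ℓ) ∈ C)) :
    ∀ (i : ℤ) (ℓ : ℕ), 0 < ℓ → ℓ < a i + b i →
      pathGrade m (i - (ℓ : ℤ), a i + b i - ℓ) = 2 - pathGrade m (i, ℓ) := by
  -- m ∘ x = id
  have hmx : ∀ s : ℤ, m (x s) = s := by
    intro s
    have h1 : x (m (x s)) ≤ x s := (hm (x s)).1
    have h2 : s ≤ m (x s) := (hm (x s)).2 s le_rfl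
    have := hx.le_iff_le.mp h1
    omega
  -- factorisable grade-2 paths are in C
  have hq : ∀ k : ℤ, (x (k + 2), (x (k + 2) - x k).toNat) ∈ C := by
    intro k
    have hxx : x k < x (k + 2) := hx (by omega)
    have hlen : ((x (k + 2) - x k).toNat : ℤ) = x (k + 2) - x k :=
      Int.toNat_of_nonneg (by omega)
    apply hC2
    · refine ⟨⟨k + 2, rfl⟩, ⟨k, ?_⟩⟩
      simp only [hlen]
      ring
    · unfold pathGrade
      simp only [hlen]
      have e : x (k + 2) - (x (k + 2) - x k) = x k := by ring
      rw [e, hmx, hmx]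
      ring
  intro i ℓ hℓ hℓ'
  set k := m i with hk
  have hk1 : x k ≤ i := (hm i).1
  have hk2 : i < x (k + 1) := by
    by_contra h
    push_neg at h
    have := (hm i).2 (k + 1) h
    omega
  -- lengths of the two relevant grade-2 factorisable paths
  have hx02 : x (k - 2) < x k := hx (by omega)
  have hx12 : x (k - 1) < x (k + 1) := hx (by omega)
  have hx01 : x (k - 2) < x (k - 1) := hx (by omega)
  have hq2 : (x k, (x k - x (k - 2)).toNat) ∈ C := by
    have h1 := hq (k - 2)
    have e : k - 2 + 2 = k := by ring
    rw [e] at h1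
    exact h1
  have hq1 : (x (k + 1), (x (k + 1) - x (k - 1)).toNat) ∈ C := by
    have h1 := hq (k - 1)
    have e : k - 1 + 2 = k + 1 := by ring
    rw [e] at h1
    exact h1
  have hlen2 : (((x k - x (k - 2)).toNat : ℕ) : ℤ) = x k - x (k - 2) :=
    Int.toNat_of_nonneg (by omega)
  have hlen1 : (((x (k + 1) - x (k - 1)).toNat : ℕ) : ℤ) = x (k + 1) - x (k - 1) :=
    Int.toNat_of_nonneg (by omega)
  -- the key claim
  have key : m (i - (a i : ℤ) - (b i : ℤ)) = k - 2 := by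
    -- first establish the two-sided bound x(k-2) ≤ i - a - b < x(k-1)
    have hbound : x (k - 2) ≤ i - (a i : ℤ) - (b i : ℤ) ∧
        i - (a i : ℤ) - (b i : ℤ) < x (k - 1) := by
      rcases hb i with ⟨hb0, ℓ₀, hℓ₀⟩ | ⟨hb1, hnoC⟩
      · -- b i = 0, so (i, a i) ∈ C
        have hℓ₀a : ℓ₀ ≤ a i := (ha i).2 ℓ₀ (hCN hℓ₀)
        have haC : (i, a i) ∈ C := by
          have hsub : ZIsSubpath (i, ℓ₀) (i, a i) := by
            constructor
            · exact le_rfl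
            · simp only
              omega
          have heq := hCmax _ hℓ₀ _ (ha i).1 hsub
          rw [← heq]
          exact hℓ₀
        rw [hb0]
        by_cases hT : i - (a i : ℤ) ≤ x (k - 2)
        · -- q₂ is a subpath of (i, a i), hence equal
          have hsub : ZIsSubpath (x k, (x k - x (k - 2)).toNat) (i, a i) := by
            constructor
            · exact hk1
            · simp only [hlen2]
              omega
          have heq := hCmax _ hq2 _ (ha i).1 hsub
          have h1 : x k = i ∧ (x k - x (k - 2)).toNat = a i := Prod.mk.injEq .. ▸ heq
          obtain ⟨e1, e2⟩ := h1
          have e2' : ((a i : ℕ) : ℤ) = x k - x (k - 2) := by rw [← e2]; exact hlen2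
          omega
        · push_neg at hT
          constructor
          · omega
          · by_contra h
            push_neg at h
            have hsub : ZIsSubpath (i, a i) (x (k + 1), (x (k + 1) - x (k - 1)).toNat) := by
              constructor
              · exact le_of_lt hk2
              · simp only [hlen1]
                omega
            have heq := hCmax _ haC _ (hCN hq1) hsub
            have h1 : i = x (k + 1) ∧ a i = (x (k + 1) - x (k - 1)).toNat :=
              Prod.mk.injEq .. ▸ heq
            omega
      · -- b i = 1, no element of C starts at i
        rw [hb1]
        constructor
        · by_contra h
          push_neg at h
          have hsub : ZIsSubpath (x k, (x k - x (k - 2)).toNat) (i, a i) := by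
            constructor
            · exact hk1
            · simp only [hlen2]
              omega
          have heq := hCmax _ hq2 _ (ha i).1 hsub
          exact hnoC ⟨a i, heq ▸ hq2⟩
        · by_contra h
          push_neg at h
          have hsub : ZIsSubpath (i, a i + 1) (x (k + 1), (x (k + 1) - x (k - 1)).toNat) := by
            constructor
            · exact le_of_lt hk2
            · simp only [hlen1]
              push_cast
              omega
          have hmem : (i, a i + 1) ∈ N := hNdown _ _ hsub (hCN hq1)
          have := (ha i).2 (a i + 1) hmem
          omega
    -- conclude the value of m
    obtain ⟨hlo, hhi⟩ := hbound
    have h1 : k - 2 ≤ m (i - (a i : ℤ) - (b i : ℤ)) := (hm _).2 _ hlo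
    have h2 := (hm (i - (a i : ℤ) - (b i : ℤ))).1
    by_contra hne
    have h3 : k - 1 ≤ m (i - (a i : ℤ) - (b i : ℤ)) := by omega
    have h4 : x (k - 1) ≤ x (m (i - (a i : ℤ) - (b i : ℤ))) := hx.monotone h3
    omega
  -- deduce the goal from `key`
  have hcast : (((a i + b i - ℓ : ℕ)) : ℤ) = (a i : ℤ) + (b i : ℤ) - (ℓ : ℤ) := by
    omega
  unfold pathGrade
  simp only [hcast]
  have e : i - (ℓ : ℤ) - ((a i : ℤ) + (b i : ℤ) - (ℓ : ℤ)) = i - (a i : ℤ) - (b i : ℤ) := by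
    ring
  rw [e, key]
  omega
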